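/- Let Γ be a finite connected multigraph, v0 a vertex of Γ, and μ a degree-d polarization on Γ. If (E,D) is a (v0,μ)-quasistable degree-d pseudo-divisor on Γ with |E| < b1(Γ), then there exists a (v0,μ)-quasistable degree-d pseudo-divisor (E',D') on Γ with E ⊆ E', |E'| = |E| + 1, and such that (E',D') specializes to (E,D), i.e., (E',D') ≥ (E,D) in QD_{v0,μ}(Γ). -/

import Mathlib

/-- A finite multigraph: each edge has two (possibly equal) endpoints
(loops and parallel edges are allowed). -/
structure Multigraph where
  V : Type
  E : Type
  [fV : Fintype V]
  [dV : DecidableEq V]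
  [fE : Fintype E]
  [dE : DecidableEq E]
  ends1 : E → V
  ends2 : E → V

attribute [instance] Multigraph.fV Multigraph.dV Multigraph.fE Multigraph.dE

namespace Multigraph

variable (G : Multigraph)

/-- The edge `e` joins the vertices `v` and `w`. -/
def Joins (e : G.E) (v w : G.V) : Prop :=
  (G.ends1 e = v ∧ G.ends2 e = w) ∨ (G.ends1 e = w ∧ G.ends2 e = v)

instance (e : G.E) (v w : G.V) : Decidable (G.Joins e v w) := by
  unfold Joins; infer_instance

/-- `E(A,B)`: the set of edges joining a vertex of `A ∖ B` to a vertex of `B ∖ A`. -/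
def betweenSet (A B : Finset G.V) : Finset G.E :=
  Finset.univ.filter fun e => ∃ v ∈ A \ B, ∃ w ∈ B \ A, G.Joins e v w

/-- `δ_A := |E(A, Aᶜ)|`. -/
def delta (A : Finset G.V) : ℕ := (G.betweenSet A Aᶜ).card

/-- One step along an edge belonging to `S`. -/
def Step (S : Set G.E) (v w : G.V) : Prop := ∃ e ∈ S, G.Joins e v w

/-- The spanning subgraph with edge set `S` is connected. -/
def ConnectedOn (S : Set G.E) : Prop :=
  ∀ v w : G.V, Relation.ReflTransGen (G.Step S) v w

def Connected : Prop := G.ConnectedOn Set.univ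

/-- A spanning tree: a subset of edges making a connected spanning subgraph whose number
of edges equals the number of vertices minus one. -/
def IsSpanningTree (T : Finset G.E) : Prop :=
  G.ConnectedOn ↑T ∧ T.card + 1 = Fintype.card G.V

/-- First Betti number of a connected graph. -/
def firstBetti : ℕ := Fintype.card G.E + 1 - Fintype.card G.V

/-- Degree of a divisor. -/
def deg (D : G.V → ℤ) : ℤ := ∑ v, D v

/-- A degree-`d` polarization. -/
def IsPolarization (μ : G.V → ℝ) (d : ℤ) : Prop := (∑ v, μ v) = (d : ℝ)

/-- `β_D(A) = deg(D|_A) - μ(A) + δ_A / 2`. -/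
noncomputable def beta (μ : G.V → ℝ) (D : G.V → ℤ) (A : Finset G.V) : ℝ :=
  (∑ v ∈ A, (D v : ℝ)) - (∑ v ∈ A, μ v) + (G.delta A : ℝ) / 2

/-- `D` is `(v0,μ)`-quasistable: `β_D(A) ≥ 0` for every proper subset `A` of the vertices,
with strict inequality whenever `v0 ∈ A`. -/
def Quasistable (μ : G.V → ℝ) (v0 : G.V) (D : G.V → ℤ) : Prop :=
  ∀ A : Finset G.V, A ⊂ Finset.univ →
    0 ≤ G.beta μ D A ∧ (v0 ∈ A → 0 < G.beta μ D A)

/-- Number of incidences of `v` with edges in `S` (loops counted twice). -/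
def valIn (S : Finset G.E) (v : G.V) : ℕ :=
  ∑ e ∈ S, ((if G.ends1 e = v then 1 else 0) + (if G.ends2 e = v then 1 else 0))

/-- Valence of a vertex (loops counted twice). -/
def val (v : G.V) : ℕ := G.valIn Finset.univ v

/-- The vertices of the `S`-subdivision: original vertices plus one exceptional vertex
for each edge in `S`. -/
abbrev subV (S : Finset G.E) : Type := G.V ⊕ {e : G.E // e ∈ S}

/-- The `S`-subdivision of `G`: each edge `e ∈ S` is replaced by two edges meeting at a new
exceptional vertex. -/
def subdiv (S : Finset G.E) : Multigraph where
  V := G.subV S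
  E := {e : G.E // e ∉ S} ⊕ ({e : G.E // e ∈ S} × Bool)
  ends1 := fun e => match e with
    | Sum.inl x => Sum.inl (G.ends1 x.1)
    | Sum.inr (x, false) => Sum.inl (G.ends1 x.1)
    | Sum.inr (x, true) => Sum.inr x
  ends2 := fun e => match e with
    | Sum.inl x => Sum.inl (G.ends2 x.1)
    | Sum.inr (x, false) => Sum.inr x
    | Sum.inr (x, true) => Sum.inl (G.ends2 x.1)

/-- The polarization `μ^S` on the `S`-subdivision: `μ` on old vertices, `0` on
exceptional vertices. -/
noncomputable def subPol (S : Finset G.E) (μ : G.V → ℝ) : G.subV S → ℝ :=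
  Sum.elim μ fun _ => 0

/-- A divisor on the `S`-subdivision is a pseudo-divisor when it takes value `-1` at
every exceptional vertex. -/
def IsPseudoDivisor (S : Finset G.E) (D : G.subV S → ℤ) : Prop :=
  ∀ x : {e : G.E // e ∈ S}, D (Sum.inr x) = -1

/-- `(S,D)` is a `(v0,μ)`-quasistable degree-`d` pseudo-divisor on `G`. -/
def QSPseudo (μ : G.V → ℝ) (v0 : G.V) (d : ℤ) (S : Finset G.E)
    (D : G.subV S → ℤ) : Prop :=
  G.IsPseudoDivisor S D ∧ (∑ v, D v) = d ∧
    (G.subdiv S).Quasistable (G.subPol S μ) (Sum.inl v0) D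

/-- The graph obtained by deleting the edges in `S`. -/
def deleteEdges (S : Finset G.E) : Multigraph where
  V := G.V
  E := {e : G.E // e ∉ S}
  ends1 := fun e => G.ends1 e.1
  ends2 := fun e => G.ends2 e.1

/-- A pseudo-divisor on `G`: a subset of edges together with a divisor on the associated
subdivision. -/
def PD : Type := Σ S : Finset G.E, (G.subV S → ℤ)

variable {G}

/-- The specialization (partial) order on pseudo-divisors on a fixed graph:
`PDLe x y` holds when `y` specializes to `x`, i.e. `x.1 ⊆ y.1` and there is a
specialization `Γ^{y.1} → Γ^{x.1}` compatible with the identity of `Γ` (each exceptional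
vertex over an edge of `y.1 ∖ x.1` is merged into one of the two endpoints of that edge)
carrying `y.2` to `x.2`. -/
def PDLe (x y : G.PD) : Prop :=
  ∃ h : x.1 ⊆ y.1, ∃ c : G.E → G.V,
    (∀ e ∈ y.1 \ x.1, c e = G.ends1 e ∨ c e = G.ends2 e) ∧
    (∀ v : G.V, x.2 (Sum.inl v) =
      y.2 (Sum.inl v) + ∑ e ∈ (y.1 \ x.1).attach,
        (if c e.1 = v then y.2 (Sum.inr ⟨e.1, (Finset.mem_sdiff.mp e.2).1⟩) else 0)) ∧
    (∀ (e : G.E) (hx : e ∈ x.1), x.2 (Sum.inr ⟨e, hx⟩) = y.2 (Sum.inr ⟨e, h hx⟩))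

/-- Strict specialization order on pseudo-divisors. -/
def PDLt (x y : G.PD) : Prop := PDLe x y ∧ x ≠ y

variable (G)

/-- The set `QD_{v0,μ}(G)` of `(v0,μ)`-quasistable degree-`d` pseudo-divisors on `G`. -/
def QDSet (μ : G.V → ℝ) (v0 : G.V) (d : ℤ) : Set G.PD :=
  {x | G.QSPseudo μ v0 d x.1 x.2}

end Multigraph

/-- A specialization `G → G'` of multigraphs: the contraction of a subset of the edges of
`G`. It is encoded by the map `vmap` on vertices and the identification `emap` of the
edges of `G'` with the non-contracted edges of `G`; the fibers of `vmap` are exactly the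
connected components spanned by contracted edges. -/
structure Multigraph.Spec (G G' : Multigraph) where
  vmap : G.V → G'.V
  emap : G'.E → G.E
  emap_inj : Function.Injective emap
  vmap_surj : Function.Surjective vmap
  joins_comm : ∀ e' : G'.E,
    G'.Joins e' (vmap (G.ends1 (emap e'))) (vmap (G.ends2 (emap e')))
  glue : ∀ e : G.E, (¬ ∃ e', emap e' = e) → vmap (G.ends1 e) = vmap (G.ends2 e)
  fiber_conn : ∀ v w : G.V, vmap v = vmap w →
    Relation.ReflTransGen
      (fun a b => ∃ e : G.E, (¬ ∃ e', emap e' = e) ∧ G.Joins e a b) v w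

namespace Multigraph.Spec

variable {G G' : Multigraph} (f : Multigraph.Spec G G')

/-- The set of edges contracted by the specialization. -/
def contracted : Finset G.E := Finset.univ.filter fun e => ¬ ∃ e', f.emap e' = e

/-- Pushforward of a polarization. -/
noncomputable def pushPol (μ : G.V → ℝ) : G'.V → ℝ := fun v' => ∑ v, if f.vmap v = v' then μ v else 0

/-- Pushforward of a divisor. -/
def pushDiv (D : G.V → ℤ) : G'.V → ℤ := fun v' => ∑ v, if f.vmap v = v' then D v else 0

/-- The edge set `S ∩ E(G')` of the pushforward of a pseudo-divisor `(S,D)`. -/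
def pushEdges (S : Finset G.E) : Finset G'.E :=
  Finset.univ.filter fun e' => f.emap e' ∈ S

/-- Pushforward of the divisor part of a pseudo-divisor `(S,D)` along the induced
specialization `G^S → G'^{S ∩ E(G')}`. -/
def pushPDFun (S : Finset G.E) (D : G.subV S → ℤ) :
    G'.subV (f.pushEdges S) → ℤ
  | Sum.inl v' => (∑ v, if f.vmap v = v' then D (Sum.inl v) else 0) +
      ∑ e ∈ S.attach,
        (if e.1 ∈ f.contracted ∧ f.vmap (G.ends1 e.1) = v' then D (Sum.inr e) else 0)
  | Sum.inr x => D (Sum.inr ⟨f.emap x.1, (Finset.mem_filter.mp x.2).2⟩)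

/-- Pushforward of a pseudo-divisor along a specialization. -/
def pushPD (x : G.PD) : G'.PD := ⟨f.pushEdges x.1, f.pushPDFun x.1 x.2⟩

end Multigraph.Spec

open Multigraph

namespace QSAux
open Multigraph Finset

variable {G : Multigraph}

lemma joins_symm {e : G.E} {a b : G.V} (h : G.Joins e a b) : G.Joins e b a := by
  rcases h with ⟨h1, h2⟩ | ⟨h1, h2⟩
  · exact Or.inr ⟨h1, h2⟩
  · exact Or.inl ⟨h1, h2⟩

lemma joins_eq {e : G.E} {a b c d : G.V} (h : G.Joins e a b) (h' : G.Joins e c d) :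
    (a = c ∧ b = d) ∨ (a = d ∧ b = c) := by
  rcases h with ⟨h1, h2⟩ | ⟨h1, h2⟩ <;> rcases h' with ⟨h3, h4⟩ | ⟨h3, h4⟩ <;>
    subst h1 <;> subst h2 <;> simp_all

/-- crossing indicator of a single edge for a single set -/
def xi (A : Finset G.V) (e : G.E) : ℕ :=
  if (G.ends1 e ∈ A ∧ G.ends2 e ∉ A) ∨ (G.ends2 e ∈ A ∧ G.ends1 e ∉ A) then 1 else 0

/-- crossing indicator between `A \ B` and `B \ A` -/
def cij (A B : Finset G.V) (e : G.E) : ℕ :=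
  if (G.ends1 e ∈ A ∧ G.ends1 e ∉ B ∧ G.ends2 e ∈ B ∧ G.ends2 e ∉ A) ∨
     (G.ends2 e ∈ A ∧ G.ends2 e ∉ B ∧ G.ends1 e ∈ B ∧ G.ends1 e ∉ A) then 1 else 0

/-- number of edges joining `A \ B` to `B \ A` -/
def crossN (A B : Finset G.V) : ℕ := ∑ e : G.E, cij A B e

lemma delta_eq_sum (A : Finset G.V) : G.delta A = ∑ e : G.E, xi A e := by
  unfold Multigraph.delta Multigraph.betweenSet
  rw [Finset.card_filter]
  apply Finset.sum_congr rfl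
  intro e _
  unfold xi
  congr 1
  apply propext
  constructor
  · rintro ⟨v, hv, w, hw, hj⟩
    simp only [Finset.mem_sdiff, Finset.mem_compl] at hv hw
    rcases hj with ⟨h1, h2⟩ | ⟨h1, h2⟩
    · subst h1; subst h2; exact Or.inl ⟨hv.1, hw.1⟩
    · subst h1; subst h2; exact Or.inr ⟨hv.1, hw.1⟩
  · rintro (⟨h1, h2⟩ | ⟨h1, h2⟩)
    · exact ⟨G.ends1 e, by simp [h1, h2], G.ends2 e, by simp [h1, h2], Or.inl ⟨rfl, rfl⟩⟩
    · exact ⟨G.ends2 e, by simp [h1, h2], G.ends1 e, by simp [h1, h2], Or.inr ⟨rfl, rfl⟩⟩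

lemma xi_uncross (A B : Finset G.V) (e : G.E) :
    xi A e + xi B e = xi (A ∪ B) e + xi (A ∩ B) e + 2 * cij A B e := by
  unfold xi cij
  by_cases h1 : G.ends1 e ∈ A <;> by_cases h2 : G.ends1 e ∈ B <;>
    by_cases h3 : G.ends2 e ∈ A <;> by_cases h4 : G.ends2 e ∈ B <;>
    simp [h1, h2, h3, h4, Finset.mem_union, Finset.mem_inter]

lemma delta_uncross (A B : Finset G.V) :
    G.delta A + G.delta B = G.delta (A ∪ B) + G.delta (A ∩ B) + 2 * crossN A B := by
  simp only [delta_eq_sum, crossN, Finset.mul_sum, ← Finset.sum_add_distrib]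
  exact Finset.sum_congr rfl fun e _ => xi_uncross A B e

lemma beta_uncross (μ : G.V → ℝ) (D : G.V → ℤ) (A B : Finset G.V) :
    G.beta μ D A + G.beta μ D B =
      G.beta μ D (A ∪ B) + G.beta μ D (A ∩ B) + crossN A B := by
  unfold Multigraph.beta
  have hD : (∑ v ∈ A ∪ B, (D v : ℝ)) + (∑ v ∈ A ∩ B, (D v : ℝ)) =
      (∑ v ∈ A, (D v : ℝ)) + (∑ v ∈ B, (D v : ℝ)) := Finset.sum_union_inter
  have hμ : (∑ v ∈ A ∪ B, μ v) + (∑ v ∈ A ∩ B, μ v) =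
      (∑ v ∈ A, μ v) + (∑ v ∈ B, μ v) := Finset.sum_union_inter
  have hδ : (G.delta A : ℝ) + (G.delta B : ℝ) =
      (G.delta (A ∪ B) : ℝ) + (G.delta (A ∩ B) : ℝ) + 2 * (crossN A B : ℝ) := by
    have := delta_uncross A B
    exact_mod_cast congrArg (Nat.cast : ℕ → ℝ) this
  linarith

lemma cij_eq_one {A B : Finset G.V} {e : G.E} {a b : G.V} (hj : G.Joins e a b)
    (ha : a ∈ A) (ha' : a ∉ B) (hb : b ∈ B) (hb' : b ∉ A) : cij A B e = 1 := by
  unfold cij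
  rcases hj with ⟨h1, h2⟩ | ⟨h1, h2⟩
  · subst h1; subst h2; simp [ha, ha', hb, hb']
  · subst h1; subst h2; simp [ha, ha', hb, hb']

lemma crossN_ge_one {A B : Finset G.V} {e : G.E} (h : cij A B e = 1) :
    (1 : ℕ) ≤ crossN A B := by
  calc (1:ℕ) = cij A B e := h.symm
  _ ≤ ∑ e : G.E, cij A B e := Finset.single_le_sum (fun _ _ => Nat.zero_le _) (Finset.mem_univ e)

lemma crossN_ge_two {A B : Finset G.V} {e f : G.E} (hef : e ≠ f)
    (he : cij A B e = 1) (hf : cij A B f = 1) : (2 : ℕ) ≤ crossN A B := by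
  have hsub : ({e, f} : Finset G.E) ⊆ Finset.univ := Finset.subset_univ _
  have : ∑ x ∈ ({e, f} : Finset G.E), cij A B x ≤ crossN A B :=
    Finset.sum_le_sum_of_subset hsub
  rwa [Finset.sum_pair hef, he, hf] at this

lemma beta_univ (μ : G.V → ℝ) (D : G.V → ℤ) (d : ℤ)
    (hD : (∑ v, D v) = d) (hμ : (∑ v, μ v) = (d : ℝ)) :
    G.beta μ D Finset.univ = 0 := by
  unfold Multigraph.beta
  have hδ : G.delta (Finset.univ : Finset G.V) = 0 := by
    unfold Multigraph.delta Multigraph.betweenSet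
    rw [Finset.card_eq_zero]
    apply Finset.filter_false_of_mem
    rintro e _ ⟨v, hv, w, hw, _⟩
    simp at hw
  rw [hδ, hμ]
  have : (∑ v : G.V, (D v : ℝ)) = (d : ℝ) := by exact_mod_cast congrArg (Int.cast : ℤ → ℝ) hD
  rw [this]
  push_cast
  ring

end QSAux

namespace QSAux
open Multigraph Finset

variable {G : Multigraph}

/-- A "bad" set for `(μ, D, v0)`. -/
def MBad (μ : G.V → ℝ) (D : G.V → ℤ) (v0 : G.V) (W : Finset G.V) : Prop :=
  W ⊂ Finset.univ ∧ G.beta μ D W ≤ 1 ∧ (v0 ∈ W ∨ G.beta μ D W < 1)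

/-- `(t → v)` is blocked. -/
def MBlk (μ : G.V → ℝ) (D : G.V → ℤ) (v0 : G.V) (t v : G.V) : Prop :=
  ∃ W, MBad μ D v0 W ∧ t ∈ W ∧ v ∉ W

/-- `(t → v)` is blocked by a set respecting the cluster `S`. -/
def MBlkR (μ : G.V → ℝ) (D : G.V → ℤ) (v0 : G.V) (S : Finset G.V) (t v : G.V) : Prop :=
  ∃ W, MBad μ D v0 W ∧ t ∈ W ∧ v ∉ W ∧ (S ⊆ W ∨ ∀ y ∈ S, y ∉ W)

lemma proper_of_not_mem {α : Type} [Fintype α] [DecidableEq α] {W : Finset α} {y : α}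
    (h : y ∉ W) : W ⊂ Finset.univ := by
  refine Finset.ssubset_univ_iff.mpr ?_
  intro hEq
  exact h (hEq ▸ Finset.mem_univ y)

section Uncross

variable {μ : G.V → ℝ} {D : G.V → ℤ} {v0 : G.V}

variable (hqs : ∀ W : Finset G.V, W ⊂ Finset.univ →
    0 ≤ G.beta μ D W ∧ (v0 ∈ W → 0 < G.beta μ D W))
  (hbu : G.beta μ D Finset.univ = 0)

include hqs hbu

lemma beta_nn (W : Finset G.V) : 0 ≤ G.beta μ D W := by
  rcases (Finset.subset_univ W).ssubset_or_eq with h | h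
  · exact (hqs W h).1
  · rw [h, hbu]

lemma mbad_union {W Q : Finset G.V} (hW : MBad μ D v0 W) (hQ : MBad μ D v0 Q)
    (hcr : 1 ≤ crossN W Q) (hI : (W ∩ Q) ⊂ Finset.univ) (hU : (W ∪ Q) ⊂ Finset.univ) :
    MBad μ D v0 (W ∪ Q) := by
  have key := beta_uncross μ D W Q
  have hIb := (hqs _ hI).1
  have hcrR : (1 : ℝ) ≤ (crossN W Q : ℝ) := by exact_mod_cast hcr
  have hW1 := hW.2.1
  have hQ1 := hQ.2.1
  refine ⟨hU, by linarith, ?_⟩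
  by_cases hlt : G.beta μ D (W ∪ Q) < 1
  · exact Or.inr hlt
  · left
    have hWeq : G.beta μ D W = 1 := by linarith
    rcases hW.2.2 with h | h
    · exact Finset.mem_union_left _ h
    · linarith

lemma mbad_inter {W Q : Finset G.V} (hW : MBad μ D v0 W) (hQ : MBad μ D v0 Q)
    (hcr : 1 ≤ crossN W Q) (hI : (W ∩ Q) ⊂ Finset.univ) :
    MBad μ D v0 (W ∩ Q) := by
  have key := beta_uncross μ D W Q
  have hUb : 0 ≤ G.beta μ D (W ∪ Q) := beta_nn hqs hbu _
  have hcrR : (1 : ℝ) ≤ (crossN W Q : ℝ) := by exact_mod_cast hcr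
  have hW1 := hW.2.1
  have hQ1 := hQ.2.1
  refine ⟨hI, by linarith, ?_⟩
  by_cases hlt : G.beta μ D (W ∩ Q) < 1
  · exact Or.inr hlt
  · left
    have hWeq : G.beta μ D W = 1 := by linarith
    have hQeq : G.beta μ D Q = 1 := by linarith
    have hvW : v0 ∈ W := by rcases hW.2.2 with h | h; exact h; linarith
    have hvQ : v0 ∈ Q := by rcases hQ.2.2 with h | h; exact h; linarith
    exact Finset.mem_inter.mpr ⟨hvW, hvQ⟩

lemma mbad_contra {W Q : Finset G.V} (hW : MBad μ D v0 W) (hQ : MBad μ D v0 Q)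
    (hcr : 2 ≤ crossN W Q) (hI : (W ∩ Q) ⊂ Finset.univ) : False := by
  have key := beta_uncross μ D W Q
  have hUb : 0 ≤ G.beta μ D (W ∪ Q) := beta_nn hqs hbu _
  have hIb := (hqs _ hI).1
  have hcrR : (2 : ℝ) ≤ (crossN W Q : ℝ) := by exact_mod_cast hcr
  have hW1 := hW.2.1
  have hQ1 := hQ.2.1
  have hWeq : G.beta μ D W = 1 := by linarith
  have hQeq : G.beta μ D Q = 1 := by linarith
  have hvW : v0 ∈ W := by rcases hW.2.2 with h | h; exact h; linarith
  have hvQ : v0 ∈ Q := by rcases hQ.2.2 with h | h; exact h; linarith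
  have hstrict := (hqs _ hI).2 (Finset.mem_inter.mpr ⟨hvW, hvQ⟩)
  linarith

lemma transfer {S : Finset G.V} {z s t v : G.V} {e f : G.E}
    (hzS : z ∉ S) (hsS : s ∈ S) (hjf : G.Joins f z s) (hje : G.Joins e t v) (hef : e ≠ f)
    {P Q W : Finset G.V}
    (hP : MBad μ D v0 P) (hSP : S ⊆ P) (hzP : z ∉ P)
    (hQ : MBad μ D v0 Q) (hzQ : z ∈ Q) (hSQ : ∀ y ∈ S, y ∉ Q)
    (hW : MBad μ D v0 W) (htW : t ∈ W) (hvW : v ∉ W)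
    (hWS : S ⊆ W ∨ ∀ y ∈ S, y ∉ W) :
    ∃ W', MBad μ D v0 W' ∧ t ∈ W' ∧ v ∉ W' ∧
      (insert z S ⊆ W' ∨ ∀ y ∈ insert z S, y ∉ W') := by
  by_cases hzW : z ∈ W
  · rcases hWS with hSW | hd
    · exact ⟨W, hW, htW, hvW, Or.inl (Finset.insert_subset hzW hSW)⟩
    · -- z ∈ W, S disjoint from W : use P
      have hsW : s ∉ W := hd s hsS
      have hsP : s ∈ P := hSP hsS
      have hcf : cij W P f = 1 := cij_eq_one hjf hzW hzP hsP hsW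
      by_cases hvP : v ∈ P
      · by_cases htP : t ∈ P
        · have hIp : (W ∩ P) ⊂ Finset.univ :=
            proper_of_not_mem (show v ∉ W ∩ P by simp [hvW])
          refine ⟨W ∩ P, mbad_inter hqs hbu hW hP (crossN_ge_one hcf) hIp,
            Finset.mem_inter.mpr ⟨htW, htP⟩, by simp [hvW], Or.inr ?_⟩
          intro y hy
          rcases Finset.mem_insert.mp hy with rfl | hyS
          · simp [hzP]
          · simp only [Finset.mem_inter, not_and]
            intro hyW
            exact absurd hyW (hd y hyS)
        · have hce : cij W P e = 1 := cij_eq_one hje htW htP hvP hvW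
          have hIp : (W ∩ P) ⊂ Finset.univ :=
            proper_of_not_mem (show z ∉ W ∩ P by simp [hzP])
          exact (mbad_contra hqs hbu hW hP (crossN_ge_two hef hce hcf) hIp).elim
      · have hIp : (W ∩ P) ⊂ Finset.univ :=
          proper_of_not_mem (show z ∉ W ∩ P by simp [hzP])
        have hUp : (W ∪ P) ⊂ Finset.univ :=
          proper_of_not_mem (show v ∉ W ∪ P by simp [hvW, hvP])
        refine ⟨W ∪ P, mbad_union hqs hbu hW hP (crossN_ge_one hcf) hIp hUp,
          Finset.mem_union_left _ htW, by simp [hvW, hvP], Or.inl ?_⟩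
        refine Finset.insert_subset (Finset.mem_union_left _ hzW) ?_
        exact hSP.trans (Finset.subset_union_right)
  · rcases hWS with hSW | hd
    · -- z ∉ W, S ⊆ W : use Q
      have hsW : s ∈ W := hSW hsS
      have hsQ : s ∉ Q := hSQ s hsS
      have hcf : cij W Q f = 1 := cij_eq_one (joins_symm hjf) hsW hsQ hzQ hzW
      by_cases hvQ : v ∈ Q
      · by_cases htQ : t ∈ Q
        · have hIp : (W ∩ Q) ⊂ Finset.univ :=
            proper_of_not_mem (show v ∉ W ∩ Q by simp [hvW])
          refine ⟨W ∩ Q, mbad_inter hqs hbu hW hQ (crossN_ge_one hcf) hIp,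
            Finset.mem_inter.mpr ⟨htW, htQ⟩, by simp [hvW], Or.inr ?_⟩
          intro y hy
          rcases Finset.mem_insert.mp hy with rfl | hyS
          · simp [hzW]
          · simp only [Finset.mem_inter, not_and]
            intro _
            exact hSQ y hyS
        · have hce : cij W Q e = 1 := cij_eq_one hje htW htQ hvQ hvW
          have hIp : (W ∩ Q) ⊂ Finset.univ :=
            proper_of_not_mem (show s ∉ W ∩ Q by simp [hsQ])
          exact (mbad_contra hqs hbu hW hQ (crossN_ge_two hef hce hcf) hIp).elim
      · have hIp : (W ∩ Q) ⊂ Finset.univ :=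
          proper_of_not_mem (show s ∉ W ∩ Q by simp [hsQ])
        have hUp : (W ∪ Q) ⊂ Finset.univ :=
          proper_of_not_mem (show v ∉ W ∪ Q by simp [hvW, hvQ])
        refine ⟨W ∪ Q, mbad_union hqs hbu hW hQ (crossN_ge_one hcf) hIp hUp,
          Finset.mem_union_left _ htW, by simp [hvW, hvQ], Or.inl ?_⟩
        refine Finset.insert_subset (Finset.mem_union_right _ hzQ) ?_
        exact hSW.trans (Finset.subset_union_left)
    · refine ⟨W, hW, htW, hvW, Or.inr ?_⟩
      intro y hy
      rcases Finset.mem_insert.mp hy with rfl | hyS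
      · exact hzW
      · exact hd y hyS

end Uncross
end QSAux

namespace QSAux
open Multigraph Finset

variable {G : Multigraph}

lemma cycle_unblocked {μ : G.V → ℝ} {D : G.V → ℤ} {v0 : G.V}
    (hqs : ∀ W : Finset G.V, W ⊂ Finset.univ →
      0 ≤ G.beta μ D W ∧ (v0 ∈ W → 0 < G.beta μ D W))
    (hbu : G.beta μ D Finset.univ = 0)
    (k : ℕ) (hk : 1 ≤ k) (f : ℕ → G.V) (g : ℕ → G.E)
    (hfinj : ∀ i < k, ∀ j < k, f i = f j → i = j)
    (hginj : ∀ i < k, ∀ j < k, g i = g j → i = j)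
    (hjoins : ∀ i < k, G.Joins (g i) (f i) (f ((i + 1) % k))) :
    ∃ i < k, ¬ MBlk μ D v0 (f i) (f ((i + 1) % k)) ∨
      ¬ MBlk μ D v0 (f ((i + 1) % k)) (f i) := by
  by_contra hcon
  push_neg at hcon
  -- hcon : ∀ i < k, MBlk .. ∧ MBlk ..
  set Sr : ℕ → Finset G.V := fun r => insert (f 0) ((Finset.Ico (k - r) k).image f) with hSr
  have claim : ∀ r, r < k → ∀ i, i < k - r →
      MBlkR μ D v0 (Sr r) (f i) (f ((i + 1) % k)) ∧
      MBlkR μ D v0 (Sr r) (f ((i + 1) % k)) (f i) := by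
    intro r
    induction r with
    | zero =>
      intro _ i hi
      have hIco : Finset.Ico (k - 0) k = (∅ : Finset ℕ) := by
        simp
      have hS0 : Sr 0 = {f 0} := by rw [hSr]; simp [hIco]
      have h2 := hcon i (by omega)
      constructor
      · obtain ⟨W, hW, htW, hvW⟩ := h2.1
        refine ⟨W, hW, htW, hvW, ?_⟩
        by_cases h0 : f 0 ∈ W
        · exact Or.inl (by rw [hS0]; simpa using h0)
        · exact Or.inr (by rw [hS0]; simpa using h0)
      · obtain ⟨W, hW, htW, hvW⟩ := h2.2
        refine ⟨W, hW, htW, hvW, ?_⟩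
        by_cases h0 : f 0 ∈ W
        · exact Or.inl (by rw [hS0]; simpa using h0)
        · exact Or.inr (by rw [hS0]; simpa using h0)
    | succ r ih =>
      intro hr1 i hi
      have hrk : r < k := by omega
      set j := k - r - 1 with hj
      have hj1 : 1 ≤ j := by omega
      have hjk : j < k := by omega
      have hjr : j < k - r := by omega
      -- the two blockers of the edge g j at level r
      obtain ⟨hQdir, hPdir⟩ := ih hrk j hjr
      obtain ⟨Q, hQ, hzQ, hsQ', hQresp⟩ := hQdir
      obtain ⟨P, hP, hsP', hzP, hPresp⟩ := hPdir
      have hs_mem : f ((j + 1) % k) ∈ Sr r := by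
        rcases Nat.eq_zero_or_pos r with hr0 | hrpos
        · subst hr0
          have : (j + 1) % k = 0 := by
            have : j + 1 = k := by omega
            simp [this]
          rw [this, hSr]
          exact Finset.mem_insert_self _ _
        · have hmod : (j + 1) % k = k - r := by
            have h1 : j + 1 = k - r := by omega
            have h2 : k - r < k := by omega
            rw [h1, Nat.mod_eq_of_lt h2]
          rw [hmod, hSr]
          refine Finset.mem_insert_of_mem (Finset.mem_image_of_mem f ?_)
          simp [Finset.mem_Ico]; omega
      have hz_nmem : f j ∉ Sr r := by
        rw [hSr]
        simp only [Finset.mem_insert, Finset.mem_image, Finset.mem_Ico]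
        rintro (h0 | ⟨m, hm, hfm⟩)
        · have := hfinj j hjk 0 (by omega) h0
          omega
        · have := hfinj m (by omega) j hjk hfm
          omega
      have hSQ : ∀ y ∈ Sr r, y ∉ Q := by
        rcases hQresp with hsub | hdisj
        · exact absurd (hsub hs_mem) hsQ'
        · exact hdisj
      have hSP : Sr r ⊆ P := by
        rcases hPresp with hsub | hdisj
        · exact hsub
        · exact absurd hsP' (hdisj _ hs_mem)
      have hjf : G.Joins (g j) (f j) (f ((j + 1) % k)) := hjoins j hjk
      have hIco : Finset.Ico (k - (r + 1)) k = insert j (Finset.Ico (k - r) k) := by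
        apply Finset.ext; intro m
        simp only [Finset.mem_Ico, Finset.mem_insert]
        omega
      have hSnext : insert (f j) (Sr r) = Sr (r + 1) := by
        simp only [hSr]
        rw [hIco, Finset.image_insert, Finset.insert_comm]
      have hik : i < k := by omega
      have hine : g i ≠ g j := by
        intro hEq
        have := hginj i hik j hjk hEq
        omega
      obtain ⟨W1, hW1, ht1, hv1, hresp1⟩ := (ih hrk i (by omega)).1
      obtain ⟨W2, hW2, ht2, hv2, hresp2⟩ := (ih hrk i (by omega)).2
      constructor
      · obtain ⟨W', hW', ht', hv', hresp'⟩ :=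
          transfer hqs hbu hz_nmem hs_mem hjf (hjoins i hik) hine
            hP hSP hzP hQ hzQ hSQ hW1 ht1 hv1 hresp1
        exact ⟨W', hW', ht', hv', by rwa [hSnext] at hresp'⟩
      · obtain ⟨W', hW', ht', hv', hresp'⟩ :=
          transfer hqs hbu hz_nmem hs_mem hjf (joins_symm (hjoins i hik)) hine
            hP hSP hzP hQ hzQ hSQ hW2 ht2 hv2 hresp2
        exact ⟨W', hW', ht', hv', by rwa [hSnext] at hresp'⟩
  obtain ⟨W, hW, h0W, h1W, hresp⟩ := (claim (k - 1) (by omega) 0 (by omega)).1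
  have hS_last : Sr (k - 1) = insert (f 0) ((Finset.Ico 1 k).image f) := by
    simp only [hSr]
    rw [show k - (k - 1) = 1 by omega]
  have h1mem : f ((0 + 1) % k) ∈ Sr (k - 1) := by
    rw [hS_last]
    rcases Nat.eq_or_lt_of_le hk with h1 | h2
    · have : (0 + 1) % k = 0 := by
        rw [← h1]
      rw [this]
      exact Finset.mem_insert_self _ _
    · have : (0 + 1) % k = 1 := Nat.mod_eq_of_lt (by omega)
      rw [this]
      refine Finset.mem_insert_of_mem (Finset.mem_image_of_mem f ?_)
      simp [Finset.mem_Ico]; omega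
  have h0mem : f 0 ∈ Sr (k - 1) := by rw [hS_last]; exact Finset.mem_insert_self _ _
  rcases hresp with hsub | hdisj
  · exact h1W (hsub h1mem)
  · exact hdisj _ h0mem h0W
end QSAux

namespace QSAux
open Multigraph Finset

variable {G : Multigraph}

/-- The edge set `P` contains a cycle. -/
def HasCycle (P : Finset G.E) : Prop :=
  ∃ (k : ℕ) (f : ℕ → G.V) (g : ℕ → G.E), 1 ≤ k ∧ (∀ i < k, ∀ j < k, f i = f j → i = j) ∧
    (∀ i < k, ∀ j < k, g i = g j → i = j) ∧
    (∀ i < k, g i ∈ P) ∧ (∀ i < k, G.Joins (g i) (f i) (f ((i + 1) % k)))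

/-- A path of length `n` with distinct vertices and edges in `P`. -/
def IsPath (P : Finset G.E) (n : ℕ) : Prop :=
  ∃ (f : ℕ → G.V) (g : ℕ → G.E), (∀ i ≤ n, ∀ j ≤ n, f i = f j → i = j) ∧ (∀ i < n, g i ∈ P) ∧
    (∀ i < n, G.Joins (g i) (f i) (f (i + 1)))

lemma isPath_lt_card {P : Finset G.E} {n : ℕ} (h : IsPath P n) :
    n < Fintype.card G.V := by
  obtain ⟨f, g, hinj, _, _⟩ := h
  have : (Finset.range (n + 1)).card ≤ (Finset.univ : Finset G.V).card := by
    apply Finset.card_le_card_of_injOn f (fun a _ => Finset.mem_univ _)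
    intro a ha b hb hab
    simp only [Finset.coe_range, Set.mem_Iio] at ha hb
    exact hinj a (by omega) b (by omega) hab
  simpa [Finset.card_range, Finset.card_univ] using this

lemma hasCycle_mono {P P' : Finset G.E} (hsub : P' ⊆ P) (h : HasCycle P') : HasCycle P := by
  obtain ⟨k, f, g, hk, hfi, hgi, hgP, hj⟩ := h
  exact ⟨k, f, g, hk, hfi, hgi, fun i hi => hsub (hgP i hi), hj⟩

lemma hasCycle_aux : ∀ (n : ℕ) (S : Finset G.V) (P : Finset G.E), S.card ≤ n →
    (∀ e ∈ P, G.ends1 e ∈ S ∧ G.ends2 e ∈ S) → S.card ≤ P.card → 1 ≤ P.card →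
    HasCycle P := by
  intro n
  induction n with
  | zero =>
    intro S P hSn hPS hSP hP1
    obtain ⟨e, he⟩ := Finset.card_pos.mp hP1
    have := (hPS e he).1
    have hS0 : S = ∅ := Finset.card_eq_zero.mp (Nat.le_zero.mp hSn)
    rw [hS0] at this
    simp at this
  | succ n ih =>
    intro S P hSn hPS hSP hP1
    by_cases hloop : ∃ e ∈ P, G.ends1 e = G.ends2 e
    · obtain ⟨e, heP, hee⟩ := hloop
      refine ⟨1, fun _ => G.ends1 e, fun _ => e, le_refl 1, ?_, ?_, fun _ _ => heP, ?_⟩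
      · intro i hi j hj _; omega
      · intro i hi j hj _; omega
      · intro i hi
        exact Or.inl ⟨rfl, hee.symm⟩
    · push_neg at hloop
      by_cases hleaf : ∃ v ∈ S, G.valIn P v ≤ 1
      · obtain ⟨v, hvS, hval⟩ := hleaf
        set P' := P.filter (fun e => ¬(G.ends1 e = v ∨ G.ends2 e = v)) with hP'
        set S' := S.erase v with hS'
        have hfilt : (P.filter (fun e => G.ends1 e = v ∨ G.ends2 e = v)).card ≤ 1 := by
          calc (P.filter (fun e => G.ends1 e = v ∨ G.ends2 e = v)).card
              ≤ G.valIn P v := by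
                unfold Multigraph.valIn
                rw [Finset.card_filter]
                apply Finset.sum_le_sum
                intro e _
                by_cases h1 : G.ends1 e = v <;> by_cases h2 : G.ends2 e = v <;>
                  simp [h1, h2]
            _ ≤ 1 := hval
        have hPsplit := Finset.card_filter_add_card_filter_not
          (s := P) (p := fun e => G.ends1 e = v ∨ G.ends2 e = v)
        rw [← hP'] at hPsplit
        have hPP' : P.card ≤ P'.card + 1 := by omega
        have hP'S : ∀ e ∈ P', G.ends1 e ∈ S' ∧ G.ends2 e ∈ S' := by
          intro e he
          rw [hP'] at he
          obtain ⟨heP, hcond⟩ := Finset.mem_filter.mp he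
          push_neg at hcond
          exact ⟨Finset.mem_erase.mpr ⟨hcond.1, (hPS e heP).1⟩,
            Finset.mem_erase.mpr ⟨hcond.2, (hPS e heP).2⟩⟩
        have hS'c : S'.card = S.card - 1 := Finset.card_erase_of_mem hvS
        have hP'1 : 1 ≤ P'.card := by
          by_contra hc
          push_neg at hc
          have hP'0 : P'.card = 0 := by omega
          have hPcard1 : P.card ≤ 1 := by omega
          obtain ⟨e, he⟩ := Finset.card_pos.mp hP1
          have hne := hloop e he
          have h2S : ({G.ends1 e, G.ends2 e} : Finset G.V) ⊆ S := by
            intro y hy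
            rcases Finset.mem_insert.mp hy with rfl | hy
            · exact (hPS e he).1
            · rw [Finset.mem_singleton.mp hy]
              exact (hPS e he).2
          have : 2 ≤ S.card := by
            calc 2 = ({G.ends1 e, G.ends2 e} : Finset G.V).card := by
                  rw [Finset.card_insert_of_notMem (by simpa using hne), Finset.card_singleton]
              _ ≤ S.card := Finset.card_le_card h2S
          omega
        have hvS1 : 1 ≤ S.card := Finset.card_pos.mpr ⟨v, hvS⟩
        refine hasCycle_mono (Finset.filter_subset _ _) (ih S' P' (by omega) hP'S (by omega) hP'1)
      · -- every vertex of S has valence at least 2 : find a maximal path and close it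
        push_neg at hleaf
        classical
        obtain ⟨e1, he1⟩ := Finset.card_pos.mp hP1
        have hV1 : 1 ≤ Fintype.card G.V := by
          have : Nonempty G.V := ⟨G.ends1 e1⟩
          exact Fintype.card_pos
        have hpath1 : IsPath P 1 := by
          refine ⟨fun i => if i = 0 then G.ends1 e1 else G.ends2 e1, fun _ => e1, ?_, ?_, ?_⟩
          · intro i hi j hj hf
            interval_cases i <;> interval_cases j
            · rfl
            · exfalso; simp at hf; exact hloop e1 he1 hf
            · exfalso; simp at hf; exact hloop e1 he1 hf.symm
            · rfl
          · intro i _; exact he1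
          · intro i hi
            have : i = 0 := by omega
            subst this
            simp only [if_pos rfl, if_neg (by omega : (0:ℕ) + 1 ≠ 0)]
            exact Or.inl ⟨rfl, rfl⟩
        set A := (Finset.range (Fintype.card G.V + 1)).filter (IsPath P) with hA
        have hA1 : (1 : ℕ) ∈ A := by
          rw [hA]
          exact Finset.mem_filter.mpr ⟨Finset.mem_range.mpr (by omega), hpath1⟩
        have hAne : A.Nonempty := ⟨1, hA1⟩
        set N := A.max' hAne with hN
        have hNmem : N ∈ A := A.max'_mem hAne
        have hNpath : IsPath P N := (Finset.mem_filter.mp hNmem).2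
        have hN1 : 1 ≤ N := A.le_max' 1 hA1
        have hmax : ¬ IsPath P (N + 1) := by
          intro hp
          have : N + 1 ∈ A := by
            rw [hA]
            exact Finset.mem_filter.mpr
              ⟨Finset.mem_range.mpr (by have := isPath_lt_card hp; omega), hp⟩
          have := A.le_max' _ this
          omega
        obtain ⟨f, g, hfinj, hgP, hgj⟩ := hNpath
        have hjlast : G.Joins (g (N - 1)) (f (N - 1)) (f N) := by
          have := hgj (N - 1) (by omega)
          rwa [show N - 1 + 1 = N by omega] at this
        have hfNS : f N ∈ S := by
          rcases hjlast with ⟨h1, h2⟩ | ⟨h1, h2⟩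
          · rw [← h2]; exact (hPS (g (N-1)) (hgP (N-1) (by omega))).2
          · rw [← h1]; exact (hPS (g (N-1)) (hgP (N-1) (by omega))).1
        have hval2 := hleaf (f N) hfNS
        -- find a second edge at f N
        have hnext : ∃ e ∈ P, e ≠ g (N - 1) ∧ (G.ends1 e = f N ∨ G.ends2 e = f N) := by
          by_contra hc
          push_neg at hc
          have hterm : ∀ e ∈ P.erase (g (N - 1)),
              ((if G.ends1 e = f N then 1 else 0) + (if G.ends2 e = f N then 1 else 0)) = 0 := by
            intro e he
            obtain ⟨hne, heP⟩ := Finset.mem_erase.mp he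
            have := hc e heP hne
            simp [this.1, this.2]
          have hgmem : g (N - 1) ∈ P := hgP (N-1) (by omega)
          have hone : ((if G.ends1 (g (N-1)) = f N then 1 else 0)
              + (if G.ends2 (g (N-1)) = f N then 1 else 0)) = 1 := by
            have hne : f (N - 1) ≠ f N := by
              intro hEq
              have := hfinj (N - 1) (by omega) N (le_refl N) hEq
              omega
            have hnl := hloop _ hgmem
            rcases hjlast with ⟨h1, h2⟩ | ⟨h1, h2⟩
            · rw [h1, h2, if_neg hne, if_pos rfl]
            · rw [h1, h2, if_pos rfl, if_neg hne]
          have : G.valIn P (f N) = 1 := by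
            unfold Multigraph.valIn
            rw [← Finset.add_sum_erase _ _ hgmem, hone,
              Finset.sum_eq_zero hterm]
            omega
          omega
        obtain ⟨e, heP, hene, hend⟩ := hnext
        have hjw : ∃ w, G.Joins e (f N) w ∧ w ≠ f N := by
          rcases hend with h1 | h2
          · refine ⟨G.ends2 e, Or.inl ⟨h1, rfl⟩, ?_⟩
            intro hEq
            exact hloop e heP (by rw [h1, hEq])
          · refine ⟨G.ends1 e, Or.inr ⟨rfl, h2⟩, ?_⟩
            intro hEq
            exact hloop e heP (by rw [h2, hEq])
        obtain ⟨w, hjw, hwN⟩ := hjw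
        have henotg : ∀ m < N, e ≠ g m := by
          intro m hm hEq
          have hjm := hgj m hm
          rw [← hEq] at hjm
          rcases joins_eq hjw hjm with ⟨ha, hb⟩ | ⟨ha, hb⟩
          · have := hfinj N (le_refl N) m (by omega) ha
            omega
          · have := hfinj N (le_refl N) (m + 1) (by omega) ha
            have hm1 : m = N - 1 := by omega
            rw [hm1] at hEq
            exact hene hEq
        by_cases hwmem : ∃ j ≤ N, f j = w
        · -- close the cycle
          obtain ⟨j, hjN, hfj⟩ := hwmem
          have hjltN : j < N := by
            rcases Nat.lt_or_ge j N with h | h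
            · exact h
            · exfalso
              have : j = N := by omega
              rw [this] at hfj
              exact hwN hfj.symm
          set k := N + 1 - j with hkdef
          have hk2 : 2 ≤ k := by omega
          refine ⟨k, fun i => f (j + i), fun i => if i = k - 1 then e else g (j + i),
            by omega, ?_, ?_, ?_, ?_⟩
          · intro i hi i' hi' hf
            beta_reduce at hf
            have := hfinj (j + i) (by omega) (j + i') (by omega) hf
            omega
          · intro i hi i' hi' hg
            beta_reduce at hg
            by_cases h1 : i = k - 1 <;> by_cases h2 : i' = k - 1
            · omega
            · rw [if_pos h1, if_neg h2] at hg
              exact absurd hg (henotg (j + i') (by omega))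
            · rw [if_neg h1, if_pos h2] at hg
              exact absurd hg.symm (henotg (j + i) (by omega))
            · rw [if_neg h1, if_neg h2] at hg
              -- path edge injectivity
              have hja := hgj (j + i) (by omega)
              have hjb := hgj (j + i') (by omega)
              rw [hg] at hja
              rcases joins_eq hja hjb with ⟨ha, hb⟩ | ⟨ha, hb⟩
              · have := hfinj (j + i) (by omega) (j + i') (by omega) ha
                omega
              · have h1' := hfinj (j + i) (by omega) (j + i' + 1) (by omega) ha
                have h2' := hfinj (j + i + 1) (by omega) (j + i') (by omega) hb
                omega
          · intro i hi
            beta_reduce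
            by_cases h1 : i = k - 1
            · rw [if_pos h1]; exact heP
            · rw [if_neg h1]; exact hgP _ (by omega)
          · intro i hi
            beta_reduce
            by_cases h1 : i = k - 1
            · rw [if_pos h1, h1]
              have hmod : (k - 1 + 1) % k = 0 := by
                rw [show k - 1 + 1 = k by omega]
                simp
              rw [hmod]
              have : j + (k - 1) = N := by omega
              rw [this]
              have : j + 0 = j := by omega
              rw [this, hfj]
              exact hjw
            · rw [if_neg h1]
              have hmod : (i + 1) % k = i + 1 := Nat.mod_eq_of_lt (by omega)
              rw [hmod, show j + (i + 1) = j + i + 1 by omega]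
              exact hgj (j + i) (by omega)
        · -- extend the path : contradiction with maximality
          exfalso
          push_neg at hwmem
          apply hmax
          refine ⟨fun i => if i = N + 1 then w else f i, fun i => if i = N then e else g i,
            ?_, ?_, ?_⟩
          · intro i hi j hj hf
            beta_reduce at hf
            by_cases h1 : i = N + 1 <;> by_cases h2 : j = N + 1
            · omega
            · rw [if_pos h1, if_neg h2] at hf
              exact absurd hf.symm (hwmem j (by omega))
            · rw [if_neg h1, if_pos h2] at hf
              exact absurd hf (hwmem i (by omega))
            · rw [if_neg h1, if_neg h2] at hf
              exact hfinj i (by omega) j (by omega) hf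
          · intro i hi
            beta_reduce
            by_cases h1 : i = N
            · rw [if_pos h1]; exact heP
            · rw [if_neg h1]; exact hgP _ (by omega)
          · intro i hi
            beta_reduce
            by_cases h1 : i = N
            · subst h1
              rw [if_pos rfl, if_neg (by omega : N ≠ N + 1), if_pos rfl]
              exact hjw
            · rw [if_neg h1, if_neg (by omega : i ≠ N + 1),
                if_neg (by omega : i + 1 ≠ N + 1)]
              exact hgj i (by omega)

lemma hasCycle_of_card (v : G.V) (P : Finset G.E) (h : Fintype.card G.V ≤ P.card) :
    HasCycle P := by
  have hV1 : 1 ≤ Fintype.card G.V := Fintype.card_pos_iff.mpr ⟨v⟩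
  exact hasCycle_aux (Finset.univ : Finset G.V).card Finset.univ P (le_refl _)
    (fun e _ => ⟨Finset.mem_univ _, Finset.mem_univ _⟩)
    (by simpa [Finset.card_univ] using h) (by omega)

end QSAux

namespace QSAux
open Multigraph Finset

variable {G : Multigraph}

section Extend

/-- plain-edge crossing indicator -/
def pc {T : Finset G.E} (A : Finset (G.subV T)) (e : G.E) : ℕ :=
  if (Sum.inl (G.ends1 e) ∈ A ∧ Sum.inl (G.ends2 e) ∉ A) ∨
     (Sum.inl (G.ends2 e) ∈ A ∧ Sum.inl (G.ends1 e) ∉ A) then 1 else 0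

/-- first-half crossing indicator of a subdivided edge -/
def q1 {T : Finset G.E} (A : Finset (G.subV T)) (x : {e // e ∈ T}) : ℕ :=
  if (Sum.inl (G.ends1 x.1) ∈ A ∧ Sum.inr x ∉ A) ∨
     (Sum.inr x ∈ A ∧ Sum.inl (G.ends1 x.1) ∉ A) then 1 else 0

/-- second-half crossing indicator of a subdivided edge -/
def q2 {T : Finset G.E} (A : Finset (G.subV T)) (x : {e // e ∈ T}) : ℕ :=
  if (Sum.inr x ∈ A ∧ Sum.inl (G.ends2 x.1) ∉ A) ∨
     (Sum.inl (G.ends2 x.1) ∈ A ∧ Sum.inr x ∉ A) then 1 else 0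

lemma delta_split {T : Finset G.E} (A : Finset (G.subV T)) :
    (G.subdiv T).delta A =
      (∑ x : {e // e ∉ T}, pc A x.1) + ∑ x : {e // e ∈ T}, (q1 A x + q2 A x) := by
  rw [delta_eq_sum (G := G.subdiv T) A]
  show (∑ e : ({e // e ∉ T} ⊕ ({e // e ∈ T} × Bool)), xi (G := G.subdiv T) A e) = _
  refine (Fintype.sum_sum_type _).trans ?_
  have h1 : (∑ x : {e // e ∉ T}, xi (G := G.subdiv T) A (Sum.inl x))
      = ∑ x : {e // e ∉ T}, pc A x.1 := rfl
  have h2 : (∑ x : {e // e ∈ T} × Bool, xi (G := G.subdiv T) A (Sum.inr x))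
      = ∑ x : {e // e ∈ T}, (q1 A x + q2 A x) := by
    rw [Fintype.sum_prod_type]
    apply Finset.sum_congr rfl
    intro x _
    rw [Fintype.sum_bool]
    show xi (G := G.subdiv T) A (Sum.inr (x, true))
      + xi (G := G.subdiv T) A (Sum.inr (x, false)) = _
    rw [Nat.add_comm]
    rfl
  exact congrArg₂ (· + ·) h1 h2

lemma sum_split {T : Finset G.E} {M : Type} [AddCommMonoid M]
    (A : Finset (G.subV T)) (F : G.subV T → M) :
    ∑ y ∈ A, F y = (∑ v : G.V, if Sum.inl v ∈ A then F (Sum.inl v) else 0)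
      + ∑ x : {e // e ∈ T}, if Sum.inr x ∈ A then F (Sum.inr x) else 0 := by
  have h1 : ∑ y ∈ A, F y = ∑ y : G.subV T, if y ∈ A then F y else 0 := by
    calc ∑ y ∈ A, F y = ∑ y ∈ A, (if y ∈ A then F y else 0) :=
          Finset.sum_congr rfl (fun y hy => by rw [if_pos hy])
      _ = ∑ y : G.subV T, if y ∈ A then F y else 0 :=
          Finset.sum_subset (Finset.subset_univ A) (fun x _ hx => if_neg hx)
  rw [h1, Fintype.sum_sum_type]

variable (S : Finset G.E) (e₀ : G.E)

lemma notmem_split {M : Type} [AddCommMonoid M] (he₀ : e₀ ∉ S) (F : G.E → M) :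
    (∑ x : {e // e ∉ S}, F x.1) = F e₀ + ∑ x : {e // e ∉ insert e₀ S}, F x.1 := by
  rw [← Finset.sum_subtype (Finset.univ \ S) (by intro x; simp) F,
      ← Finset.sum_subtype (Finset.univ \ insert e₀ S) (by intro x; simp) F]
  have hsplit : Finset.univ \ S = insert e₀ (Finset.univ \ insert e₀ S) := by
    ext e
    by_cases he : e = e₀ <;> simp [he, he₀]
  rw [hsplit, Finset.sum_insert (by simp)]

lemma mem_insert_split {M : Type} [AddCommMonoid M] (he₀ : e₀ ∉ S)
    (F : {e // e ∈ insert e₀ S} → M) :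
    (∑ x : {e // e ∈ insert e₀ S}, F x)
      = F ⟨e₀, Finset.mem_insert_self e₀ S⟩ +
        ∑ y : {e // e ∈ S}, F ⟨y.1, Finset.mem_insert_of_mem y.2⟩ := by
  have hinj : ∀ x ∈ S.attach, ∀ y ∈ S.attach,
      (⟨x.1, Finset.mem_insert_of_mem x.2⟩ : {e // e ∈ insert e₀ S})
        = ⟨y.1, Finset.mem_insert_of_mem y.2⟩ → x = y := by
    intro x _ y _ hxy
    exact Subtype.ext (by simpa using congrArg Subtype.val hxy)
  have hnm : (⟨e₀, Finset.mem_insert_self e₀ S⟩ : {e // e ∈ insert e₀ S})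
      ∉ S.attach.image (fun x => (⟨x.1, Finset.mem_insert_of_mem x.2⟩ :
        {e // e ∈ insert e₀ S})) := by
    intro hmem
    obtain ⟨y, _, hy⟩ := Finset.mem_image.mp hmem
    have hval := congrArg Subtype.val hy
    simp only at hval
    rw [← hval] at he₀
    exact he₀ y.2
  rw [Finset.univ_eq_attach, Finset.attach_insert, Finset.sum_insert hnm,
    Finset.sum_image hinj, ← Finset.univ_eq_attach]

/-- inclusion of the `S`-subdivision vertices into the `insert e₀ S`-subdivision vertices -/
def liftV : G.subV S → G.subV (insert e₀ S) :=
  Sum.map id (fun x => ⟨x.1, Finset.mem_insert_of_mem x.2⟩)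

/-- restriction of a vertex subset of the bigger subdivision -/
def Wdown (A : Finset (G.subV (insert e₀ S))) : Finset (G.subV S) :=
  Finset.univ.filter (fun y => liftV S e₀ y ∈ A)

lemma mem_Wdown_inl {A : Finset (G.subV (insert e₀ S))} {v : G.V} :
    Sum.inl v ∈ Wdown S e₀ A ↔ Sum.inl v ∈ A := by
  unfold Wdown liftV; rw [Finset.mem_filter]; simp

lemma mem_Wdown_inr {A : Finset (G.subV (insert e₀ S))} (x : {e // e ∈ S}) :
    Sum.inr x ∈ Wdown S e₀ A ↔
      Sum.inr (⟨x.1, Finset.mem_insert_of_mem x.2⟩ : {e // e ∈ insert e₀ S}) ∈ A := by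
  unfold Wdown liftV; rw [Finset.mem_filter]; simp

variable (μ : G.V → ℝ) (D : G.subV S → ℤ) (h : G.V)

/-- the extended divisor -/
def DExt : G.subV (insert e₀ S) → ℤ :=
  Sum.elim (fun v => D (Sum.inl v) + if v = h then 1 else 0) (fun _ => (-1 : ℤ))

lemma deg_diff (he₀ : e₀ ∉ S) (hD1 : ∀ x : {e // e ∈ S}, D (Sum.inr x) = -1)
    (A : Finset (G.subV (insert e₀ S))) :
    (∑ y ∈ A, ((DExt S e₀ D h) y : ℝ))
      = (∑ y ∈ Wdown S e₀ A, (D y : ℝ)) + (if Sum.inl h ∈ A then (1:ℝ) else 0)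
        + (if Sum.inr (⟨e₀, Finset.mem_insert_self e₀ S⟩ : {e // e ∈ insert e₀ S}) ∈ A
            then (-1 : ℝ) else 0) := by
  rw [sum_split A (fun y => ((DExt S e₀ D h) y : ℝ)),
      sum_split (Wdown S e₀ A) (fun y => ((D y : ℝ)))]
  have hv : (∑ v : G.V, if Sum.inl v ∈ A then ((DExt S e₀ D h) (Sum.inl v) : ℝ) else 0)
      = (∑ v : G.V, if Sum.inl v ∈ Wdown S e₀ A then ((D (Sum.inl v) : ℝ)) else 0)
        + (if Sum.inl h ∈ A then (1:ℝ) else 0) := by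
    have : ∀ v : G.V, (if Sum.inl v ∈ A then ((DExt S e₀ D h) (Sum.inl v) : ℝ) else 0)
        = (if Sum.inl v ∈ Wdown S e₀ A then ((D (Sum.inl v) : ℝ)) else 0)
          + (if v = h then (if Sum.inl v ∈ A then (1:ℝ) else 0) else 0) := by
      intro v
      simp only [mem_Wdown_inl]
      by_cases hvh : v = h
      · subst hvh
        by_cases hv : Sum.inl v ∈ A <;> simp [DExt, hv]
      · by_cases hv : Sum.inl v ∈ A <;> simp [DExt, hv, hvh]
    rw [Finset.sum_congr rfl (fun v _ => this v), Finset.sum_add_distrib]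
    congr 1
    rw [Finset.sum_ite_eq' Finset.univ h
      (fun v => (if Sum.inl v ∈ A then (1:ℝ) else 0))]
    simp
  rw [hv, mem_insert_split S e₀ he₀
    (F := fun x => if Sum.inr x ∈ A then ((DExt S e₀ D h) (Sum.inr x) : ℝ) else 0)]
  have hx : ∀ y : {e // e ∈ S},
      (if Sum.inr (⟨y.1, Finset.mem_insert_of_mem y.2⟩ : {e // e ∈ insert e₀ S}) ∈ A
        then ((DExt S e₀ D h) (Sum.inr ⟨y.1, Finset.mem_insert_of_mem y.2⟩) : ℝ) else 0)
      = (if Sum.inr y ∈ Wdown S e₀ A then ((D (Sum.inr y) : ℝ)) else 0) := by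
    intro y
    simp only [mem_Wdown_inr, hD1 y]
    simp [DExt]
  rw [Finset.sum_congr rfl (fun y _ => hx y)]
  simp [DExt]
  ring

lemma mu_diff (A : Finset (G.subV (insert e₀ S))) :
    (∑ y ∈ A, G.subPol (insert e₀ S) μ y) = ∑ y ∈ Wdown S e₀ A, G.subPol S μ y := by
  rw [sum_split A _, sum_split (Wdown S e₀ A) _]
  have hA1 : (∑ x : {e // e ∈ insert e₀ S},
      if Sum.inr x ∈ A then G.subPol (insert e₀ S) μ (Sum.inr x) else 0) = 0 := by
    apply Finset.sum_eq_zero; intro x _; simp [Multigraph.subPol]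
  have hW1 : (∑ x : {e // e ∈ S},
      if Sum.inr x ∈ Wdown S e₀ A then G.subPol S μ (Sum.inr x) else 0) = 0 := by
    apply Finset.sum_eq_zero; intro x _; simp [Multigraph.subPol]
  rw [hA1, hW1, add_zero, add_zero]
  exact Finset.sum_congr rfl (fun v _ => by simp [Multigraph.subPol, mem_Wdown_inl])

lemma delta_diff (he₀ : e₀ ∉ S) (A : Finset (G.subV (insert e₀ S))) :
    (G.subdiv (insert e₀ S)).delta A + pc A e₀
      = (G.subdiv S).delta (Wdown S e₀ A)
        + (q1 A ⟨e₀, Finset.mem_insert_self e₀ S⟩ + q2 A ⟨e₀, Finset.mem_insert_self e₀ S⟩) := by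
  rw [delta_split A, delta_split (Wdown S e₀ A)]
  have hpcsum : (∑ x : {e // e ∉ S}, pc (Wdown S e₀ A) x.1)
      = ∑ x : {e // e ∉ S}, pc A x.1 :=
    Finset.sum_congr rfl (fun x _ => by simp [pc, mem_Wdown_inl])
  have hqsum : (∑ y : {e // e ∈ S}, (q1 (Wdown S e₀ A) y + q2 (Wdown S e₀ A) y))
      = ∑ y : {e // e ∈ S},
          (q1 A ⟨y.1, Finset.mem_insert_of_mem y.2⟩ + q2 A ⟨y.1, Finset.mem_insert_of_mem y.2⟩) :=
    Finset.sum_congr rfl (fun y _ => by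
      simp [q1, q2, mem_Wdown_inl, mem_Wdown_inr])
  rw [hpcsum, hqsum, notmem_split S e₀ he₀ (pc A),
    mem_insert_split S e₀ he₀ (F := fun x => q1 A x + q2 A x)]
  ring

lemma beta_diff (he₀ : e₀ ∉ S) (hD1 : ∀ x : {e // e ∈ S}, D (Sum.inr x) = -1)
    (A : Finset (G.subV (insert e₀ S))) :
    (G.subdiv (insert e₀ S)).beta (G.subPol (insert e₀ S) μ) (DExt S e₀ D h) A
      = (G.subdiv S).beta (G.subPol S μ) D (Wdown S e₀ A)
        + (if Sum.inl h ∈ A then (1:ℝ) else 0)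
        + (if Sum.inr (⟨e₀, Finset.mem_insert_self e₀ S⟩ : {e // e ∈ insert e₀ S}) ∈ A
            then (-1:ℝ) else 0)
        + (((q1 A ⟨e₀, Finset.mem_insert_self e₀ S⟩ : ℝ)
            + (q2 A ⟨e₀, Finset.mem_insert_self e₀ S⟩ : ℝ)) - (pc A e₀ : ℝ)) / 2 := by
  have e1 : (G.subdiv (insert e₀ S)).beta (G.subPol (insert e₀ S) μ) (DExt S e₀ D h) A
      = (∑ v ∈ A, ((DExt S e₀ D h) v : ℝ)) - (∑ v ∈ A, G.subPol (insert e₀ S) μ v)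
        + ((G.subdiv (insert e₀ S)).delta A : ℝ) / 2 := rfl
  have e2 : (G.subdiv S).beta (G.subPol S μ) D (Wdown S e₀ A)
      = (∑ v ∈ Wdown S e₀ A, (D v : ℝ)) - (∑ v ∈ Wdown S e₀ A, G.subPol S μ v)
        + ((G.subdiv S).delta (Wdown S e₀ A) : ℝ) / 2 := rfl
  rw [e1, e2, deg_diff S e₀ D h he₀ hD1 A, mu_diff S e₀ μ A]
  have hδ := delta_diff S e₀ he₀ A
  have hδR : ((G.subdiv (insert e₀ S)).delta A : ℝ) + (pc A e₀ : ℝ)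
      = ((G.subdiv S).delta (Wdown S e₀ A) : ℝ)
        + ((q1 A ⟨e₀, Finset.mem_insert_self e₀ S⟩ : ℝ)
          + (q2 A ⟨e₀, Finset.mem_insert_self e₀ S⟩ : ℝ)) := by exact_mod_cast hδ
  linarith

lemma extend_qs {d : ℤ} {v0 : G.V} (hμ : (∑ v, μ v) = (d : ℝ))
    (he₀ : e₀ ∉ S)
    (hD1 : ∀ x : {e // e ∈ S}, D (Sum.inr x) = -1)
    (hdeg : (∑ y, D y) = d)
    (hq : (G.subdiv S).Quasistable (G.subPol S μ) (Sum.inl v0) D)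
    {t : G.V} (hjth : G.Joins e₀ t h)
    (hub : ∀ W : Finset (G.subV S), W ⊂ Finset.univ → Sum.inl t ∈ W → Sum.inl h ∉ W →
      1 ≤ (G.subdiv S).beta (G.subPol S μ) D W ∧
        (Sum.inl v0 ∈ W → 1 < (G.subdiv S).beta (G.subPol S μ) D W)) :
    G.QSPseudo μ v0 d (insert e₀ S) (DExt S e₀ D h) := by
  have hdegV : (∑ v : G.V, D (Sum.inl v)) = d + S.card := by
    rw [Fintype.sum_sum_type] at hdeg
    have hD2 : (∑ x : {e // e ∈ S}, D (Sum.inr x)) = -(S.card : ℤ) := by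
      rw [Finset.sum_congr rfl (fun x _ => hD1 x), Finset.sum_const, Finset.card_univ,
        Fintype.card_coe]
      simp
    rw [hD2] at hdeg
    linarith
  refine ⟨fun x => rfl, ?_, ?_⟩
  · -- degree
    rw [Fintype.sum_sum_type]
    have h1 : (∑ v : G.V, DExt S e₀ D h (Sum.inl v)) = (∑ v : G.V, D (Sum.inl v)) + 1 := by
      show (∑ v : G.V, (D (Sum.inl v) + if v = h then 1 else 0)) = _
      rw [Finset.sum_add_distrib]
      congr 1
      rw [Finset.sum_ite_eq' Finset.univ h (fun _ => (1 : ℤ))]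
      simp
    have h2 : (∑ x : {e // e ∈ insert e₀ S}, DExt S e₀ D h (Sum.inr x))
        = -((S.card : ℤ) + 1) := by
      show (∑ _x : {e // e ∈ insert e₀ S}, (-1 : ℤ)) = _
      rw [Finset.sum_const, Finset.card_univ, Fintype.card_coe,
        Finset.card_insert_of_notMem he₀]
      push_cast
      ring
    rw [h1, h2, hdegV]
    ring
  · -- quasistability
    have hμtot : (∑ y : G.subV S, G.subPol S μ y) = (d : ℝ) := by
      rw [Fintype.sum_sum_type]
      have : (∑ x : {e // e ∈ S}, G.subPol S μ (Sum.inr x)) = 0 := by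
        apply Finset.sum_eq_zero; intro x _; simp [Multigraph.subPol]
      rw [this, add_zero, ← hμ]
      rfl
    have hbu : (G.subdiv S).beta (G.subPol S μ) D Finset.univ = 0 :=
      beta_univ (G := G.subdiv S) (G.subPol S μ) D d hdeg hμtot
    intro (A : Finset (G.subV (insert e₀ S))) hA
    have hbd := beta_diff S e₀ μ D h he₀ hD1 A
    obtain ⟨y, _, hyA⟩ := Finset.exists_of_ssubset hA
    by_cases hx : Sum.inr (⟨e₀, Finset.mem_insert_self e₀ S⟩ : {e // e ∈ insert e₀ S}) ∈ A
    · -- the new exceptional vertex belongs to A ; Wdown is proper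
      have hWp : Wdown S e₀ A ⊂ Finset.univ := by
        rcases y with v | z
        · exact proper_of_not_mem (show Sum.inl v ∉ Wdown S e₀ A by
            rw [mem_Wdown_inl]; exact hyA)
        · by_cases hz : z.1 = e₀
          · exfalso
            apply hyA
            have : z = ⟨e₀, Finset.mem_insert_self e₀ S⟩ := Subtype.ext hz
            rw [this]
            exact hx
          · have hzS : z.1 ∈ S := by
              rcases Finset.mem_insert.mp z.2 with h' | h'
              · exact absurd h' hz
              · exact h'
            refine proper_of_not_mem (show Sum.inr (⟨z.1, hzS⟩ : {e // e ∈ S}) ∉ Wdown S e₀ A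
              from ?_)
            rw [mem_Wdown_inr]
            have : (⟨z.1, Finset.mem_insert_of_mem hzS⟩ : {e // e ∈ insert e₀ S}) = z :=
              Subtype.ext rfl
            rw [this]
            exact hyA
      by_cases hh : Sum.inl h ∈ A
      · -- β' = β(W₀)
        have huw : Sum.inl (G.ends1 e₀) ∈ A ∨ Sum.inl (G.ends2 e₀) ∈ A := by
          rcases hjth with ⟨he1, he2⟩ | ⟨he1, he2⟩
          · right; rw [he2]; exact hh
          · left; rw [he1]; exact hh
        have hqW := hq (Wdown S e₀ A) hWp
        have hstrict : Sum.inl v0 ∈ A → 0 < (G.subdiv S).beta (G.subPol S μ) D (Wdown S e₀ A) :=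
          fun hv => hqW.2 ((mem_Wdown_inl S e₀).mpr hv)
        by_cases hu : Sum.inl (G.ends1 e₀) ∈ A <;> by_cases hw : Sum.inl (G.ends2 e₀) ∈ A <;>
          simp only [q1, q2, pc, hx, hu, hw, hh, not_true, not_false_iff, and_true, and_false,
            true_and, false_and, false_or, or_false, if_true, if_false, true_or, or_true,
            not_true_eq_false, not_false_eq_true, if_neg, if_pos] at hbd <;>
          [skip; skip; skip; exact absurd huw (by simp [hu, hw])] <;>
          constructor <;>
          [linarith [hqW.1]; (intro hv; have := hstrict hv; linarith);
           linarith [hqW.1]; (intro hv; have := hstrict hv; linarith);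
           linarith [hqW.1]; (intro hv; have := hstrict hv; linarith)]
      · by_cases hocc : Sum.inl (G.ends1 e₀) ∈ A ∨ Sum.inl (G.ends2 e₀) ∈ A
        · -- the tail is in A : use unblockedness
          have htA : Sum.inl t ∈ A ∧ Sum.inl (G.ends1 e₀) ∈ A ∨
              Sum.inl t ∈ A ∧ Sum.inl (G.ends2 e₀) ∈ A := by
            rcases hjth with ⟨he1, he2⟩ | ⟨he1, he2⟩
            · have hw' : Sum.inl (G.ends2 e₀) ∉ A := by rw [he2]; exact hh
              have hu' : Sum.inl (G.ends1 e₀) ∈ A := by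
                rcases hocc with h' | h'
                · exact h'
                · exact absurd h' hw'
              left
              exact ⟨by rw [← he1]; exact hu', hu'⟩
            · have hu' : Sum.inl (G.ends1 e₀) ∉ A := by rw [he1]; exact hh
              have hw' : Sum.inl (G.ends2 e₀) ∈ A := by
                rcases hocc with h' | h'
                · exact absurd h' hu'
                · exact h'
              right
              exact ⟨by rw [← he2]; exact hw', hw'⟩
          have htW : Sum.inl t ∈ Wdown S e₀ A := by
            rw [mem_Wdown_inl]
            rcases htA with ⟨h', _⟩ | ⟨h', _⟩ <;> exact h'
          have hhW : Sum.inl h ∉ Wdown S e₀ A := by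
            rw [mem_Wdown_inl]; exact hh
          have hub' := hub (Wdown S e₀ A) (proper_of_not_mem hhW) htW hhW
          have hstrict : Sum.inl v0 ∈ A → 1 < (G.subdiv S).beta (G.subPol S μ) D (Wdown S e₀ A) :=
            fun hv => hub'.2 ((mem_Wdown_inl S e₀).mpr hv)
          rcases htA with ⟨_, hu'⟩ | ⟨_, hw'⟩
          · by_cases hw : Sum.inl (G.ends2 e₀) ∈ A <;>
              simp only [q1, q2, pc, hx, hu', hw, hh] at hbd <;>
              simp only [not_true, not_false_iff, and_true, and_false, true_and, false_and,
                false_or, or_false, if_true, if_false, true_or, or_true,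
                not_true_eq_false, not_false_eq_true] at hbd <;>
              (constructor
               · linarith [hub'.1]
               · intro hv; have := hstrict hv; linarith)
          · by_cases hu : Sum.inl (G.ends1 e₀) ∈ A <;>
              simp only [q1, q2, pc, hx, hu, hw', hh] at hbd <;>
              simp only [not_true, not_false_iff, and_true, and_false, true_and, false_and,
                false_or, or_false, if_true, if_false, true_or, or_true,
                not_true_eq_false, not_false_eq_true] at hbd <;>
              (constructor
               · linarith [hub'.1]
               · intro hv; have := hstrict hv; linarith)
        · -- neither endpoint is in A
          push_neg at hocc
          obtain ⟨hu, hw⟩ := hocc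
          have hqW := hq (Wdown S e₀ A) hWp
          have hstrict : Sum.inl v0 ∈ A → 0 < (G.subdiv S).beta (G.subPol S μ) D (Wdown S e₀ A) :=
            fun hv => hqW.2 ((mem_Wdown_inl S e₀).mpr hv)
          simp only [q1, q2, pc, hx, hu, hw, hh] at hbd
          simp only [not_true, not_false_iff, and_true, and_false, true_and, false_and,
            false_or, or_false, if_true, if_false, true_or, or_true,
            not_true_eq_false, not_false_eq_true] at hbd
          constructor
          · linarith [hqW.1]
          · intro hv; have := hstrict hv; linarith
    · -- the new exceptional vertex is not in A
      by_cases hWu : Wdown S e₀ A = Finset.univ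
      · -- then all original and old exceptional vertices are in A
        have hallV : ∀ v : G.V, Sum.inl v ∈ A := by
          intro v
          have : Sum.inl v ∈ Wdown S e₀ A := hWu ▸ Finset.mem_univ _
          exact (mem_Wdown_inl S e₀).mp this
        have hbW : (G.subdiv S).beta (G.subPol S μ) D (Wdown S e₀ A) = 0 := by
          rw [hWu]; exact hbu
        simp only [q1, q2, pc, hx, hallV (G.ends1 e₀), hallV (G.ends2 e₀), hallV h] at hbd
        simp only [not_true, not_false_iff, and_true, and_false, true_and, false_and,
          false_or, or_false, if_true, if_false, true_or, or_true,
          not_true_eq_false, not_false_eq_true] at hbd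
        constructor
        · linarith
        · intro _; linarith
      · have hWp : Wdown S e₀ A ⊂ Finset.univ :=
          lt_of_le_of_ne (Finset.subset_univ _) hWu
        have hqW := hq (Wdown S e₀ A) hWp
        have hstrict : Sum.inl v0 ∈ A → 0 < (G.subdiv S).beta (G.subPol S μ) D (Wdown S e₀ A) :=
          fun hv => hqW.2 ((mem_Wdown_inl S e₀).mpr hv)
        by_cases hu : Sum.inl (G.ends1 e₀) ∈ A <;> by_cases hw : Sum.inl (G.ends2 e₀) ∈ A <;>
          by_cases hh : Sum.inl h ∈ A <;>
          simp only [q1, q2, pc, hx, hu, hw, hh] at hbd <;>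
          simp only [not_true, not_false_iff, and_true, and_false, true_and, false_and,
            false_or, or_false, if_true, if_false, true_or, or_true,
            not_true_eq_false, not_false_eq_true] at hbd <;>
          (constructor
           · linarith [hqW.1]
           · intro hv; have := hstrict hv; linarith)

end Extend


end QSAux

namespace QSAux
open Multigraph Finset

variable {G : Multigraph}

lemma unblocked_bounds {μ : G.V → ℝ} {D : G.V → ℤ} {v0 t v : G.V}
    (hnb : ¬ MBlk μ D v0 t v) :
    ∀ W : Finset G.V, W ⊂ Finset.univ → t ∈ W → v ∉ W →
      1 ≤ G.beta μ D W ∧ (v0 ∈ W → 1 < G.beta μ D W) := by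
  intro W hW htW hvW
  have h1 : ¬ MBad μ D v0 W := fun hbad => hnb ⟨W, hbad, htW, hvW⟩
  unfold MBad at h1
  push_neg at h1
  have h2 := h1 hW
  by_cases hb : G.beta μ D W ≤ 1
  · obtain ⟨hnv, hge⟩ := h2 hb
    constructor
    · linarith
    · intro hv0; exact absurd hv0 hnv
  · push_neg at hb
    exact ⟨by linarith, fun _ => by linarith⟩

end QSAux

open Multigraph QSAux Finset in
/-- If `(E,D)` is a `(v0,μ)`-quasistable degree-`d` pseudo-divisor on a
connected graph `Γ` with `|E| < b₁(Γ)`, then there is a `(v0,μ)`-quasistable degree-`d`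
pseudo-divisor `(E',D')` with `E ⊆ E'`, `|E'| = |E| + 1`, specializing to `(E,D)`. -/
theorem quasistable_extend_one_edge (G : Multigraph) (hconn : G.Connected)
    (d : ℤ) (μ : G.V → ℝ) (hμ : G.IsPolarization μ d) (v0 : G.V)
    (x : G.PD) (hx : x ∈ G.QDSet μ v0 d) (hcard : x.1.card < G.firstBetti) :
    ∃ y : G.PD, y ∈ G.QDSet μ v0 d ∧ x.1 ⊆ y.1 ∧ y.1.card = x.1.card + 1 ∧
      Multigraph.PDLe x y := by
  obtain ⟨hpd, hdeg, hq⟩ := hx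
  set S := x.1 with hS
  set P : Finset G.E := Finset.univ \ S with hP
  have hPcard : Fintype.card G.V ≤ P.card := by
    have h1 : S.card ≤ Fintype.card G.E := Finset.card_le_univ S
    have h2 : P.card = Fintype.card G.E - S.card := by
      rw [hP, Finset.card_sdiff, Finset.inter_univ, Finset.card_univ]
    unfold Multigraph.firstBetti at hcard
    omega
  obtain ⟨k, f, g, hk, hfinj, hginj, hgP, hjoins⟩ := hasCycle_of_card v0 P hPcard
  have hgS : ∀ i, i < k → g i ∉ S := fun i hi => (Finset.mem_sdiff.mp (hgP i hi)).2
  -- transfer the cycle to the subdivision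
  set fH : ℕ → (G.subdiv S).V := fun i => Sum.inl (f i) with hfH
  set gH : ℕ → (G.subdiv S).E := fun i =>
    if hi : i < k then Sum.inl ⟨g i, hgS i hi⟩ else Sum.inl ⟨g 0, hgS 0 (by omega)⟩ with hgH
  have hμtot : (∑ y : G.subV S, G.subPol S μ y) = (d : ℝ) := by
    rw [Fintype.sum_sum_type]
    have hz : (∑ x : {e // e ∈ S}, G.subPol S μ (Sum.inr x)) = 0 := by
      apply Finset.sum_eq_zero; intro x _; simp [Multigraph.subPol]
    rw [hz, add_zero, ← hμ]
    rfl
  have hbu : (G.subdiv S).beta (G.subPol S μ) x.2 Finset.univ = 0 :=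
    beta_univ (G := G.subdiv S) (G.subPol S μ) x.2 d hdeg hμtot
  have hfinjH : ∀ i < k, ∀ j < k, fH i = fH j → i = j := by
    intro i hi j hj hf
    rw [hfH] at hf
    exact hfinj i hi j hj (Sum.inl_injective hf)
  have hginjH : ∀ i < k, ∀ j < k, gH i = gH j → i = j := by
    intro i hi j hj hgij
    rw [hgH] at hgij
    beta_reduce at hgij
    replace hgij : (Sum.inl ⟨g i, hgS i hi⟩ : (G.subdiv S).E) = Sum.inl ⟨g j, hgS j hj⟩ :=
      Eq.trans (Eq.symm (dif_pos hi)) (Eq.trans hgij (dif_pos hj))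
    exact hginj i hi j hj (congrArg Subtype.val (Sum.inl_injective hgij))
  have hjoinsH : ∀ i < k, (G.subdiv S).Joins (gH i) (fH i) (fH ((i + 1) % k)) := by
    intro i hi
    rw [hgH]
    beta_reduce
    refine (congrArg (fun z => (G.subdiv S).Joins z (fH i) (fH ((i + 1) % k))) (dif_pos hi)).mpr ?_
    rcases hjoins i hi with ⟨h1, h2⟩ | ⟨h1, h2⟩
    · exact Or.inl ⟨congrArg Sum.inl h1, congrArg Sum.inl h2⟩
    · exact Or.inr ⟨congrArg Sum.inl h1, congrArg Sum.inl h2⟩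
  obtain ⟨i, hik, hdir⟩ :=
    cycle_unblocked (G := G.subdiv S) (μ := G.subPol S μ) (D := x.2) (v0 := Sum.inl v0)
      hq hbu k hk fH gH hfinjH hginjH hjoinsH
  set e₀ : G.E := g i with he₀def
  have he₀S : e₀ ∉ S := hgS i hik
  -- choose tail and head
  have hmain : ∃ t h : G.V, G.Joins e₀ t h ∧
      (∀ W : Finset (G.subV S), W ⊂ Finset.univ → Sum.inl t ∈ W → Sum.inl h ∉ W →
        1 ≤ (G.subdiv S).beta (G.subPol S μ) x.2 W ∧
          (Sum.inl v0 ∈ W → 1 < (G.subdiv S).beta (G.subPol S μ) x.2 W)) := by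
    rcases hdir with hnb | hnb
    · refine ⟨f i, f ((i + 1) % k), hjoins i hik, ?_⟩
      have := unblocked_bounds (G := G.subdiv S) hnb
      intro W hW htW hhW
      exact this W hW htW hhW
    · refine ⟨f ((i + 1) % k), f i, joins_symm (hjoins i hik), ?_⟩
      have := unblocked_bounds (G := G.subdiv S) hnb
      intro W hW htW hhW
      exact this W hW htW hhW
  obtain ⟨t, h, hjth, hub⟩ := hmain
  have hQS := extend_qs S e₀ μ x.2 h hμ he₀S hpd hdeg hq hjth hub
  refine ⟨⟨insert e₀ S, DExt S e₀ x.2 h⟩, hQS, Finset.subset_insert e₀ S,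
    Finset.card_insert_of_notMem he₀S, ?_⟩
  -- the specialization relation
  have hdiffset : insert e₀ S \ S = {e₀} := by
    ext e
    simp only [Finset.mem_sdiff, Finset.mem_insert, Finset.mem_singleton]
    constructor
    · rintro ⟨rfl | heS, hne⟩
      · rfl
      · exact absurd heS hne
    · rintro rfl
      exact ⟨Or.inl rfl, he₀S⟩
  unfold Multigraph.PDLe
  refine ⟨Finset.subset_insert e₀ S, fun _ => h, ?_, ?_, ?_⟩
  · intro e he
    rw [hdiffset] at he
    rw [Finset.mem_singleton.mp he]
    rcases hjth with ⟨he1, he2⟩ | ⟨he1, he2⟩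
    · exact Or.inr he2.symm
    · exact Or.inl he1.symm
  · intro v
    show x.2 (Sum.inl v) = DExt S e₀ x.2 h (Sum.inl v)
      + ∑ e ∈ ((insert e₀ S \ S)).attach,
          (if h = v then DExt S e₀ x.2 h (Sum.inr ⟨e.1, (Finset.mem_sdiff.mp e.2).1⟩) else 0)
    have hconst : ∀ e ∈ ((insert e₀ S \ S)).attach,
        (if h = v then DExt S e₀ x.2 h (Sum.inr ⟨e.1, (Finset.mem_sdiff.mp e.2).1⟩) else 0)
          = (if h = v then (-1 : ℤ) else 0) := by
      intro e _
      by_cases hv : h = v <;> simp [hv, DExt]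
    rw [Finset.sum_congr rfl hconst, Finset.sum_const, Finset.card_attach, hdiffset,
      Finset.card_singleton]
    by_cases hv : v = h
    · subst hv
      show x.2 (Sum.inl v) = (x.2 (Sum.inl v) + if v = v then 1 else 0) + _
      simp
    · have hv' : ¬ h = v := fun hh => hv hh.symm
      show x.2 (Sum.inl v) = (x.2 (Sum.inl v) + if v = h then 1 else 0) + _
      simp [hv, hv']
  · intro e hxe
    have : x.2 (Sum.inr ⟨e, hxe⟩) = -1 := hpd ⟨e, hxe⟩
    rw [this]
    rfl
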